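/- Let t: U → ℝ be a smooth function on an open set U ⊂ ℝ⁵ with coordinates (x⁰,…,x⁴), and define the coframe ω⁰ = dx⁰ + x¹dx⁴ − 3x²dx³, ω¹ = dx¹ + 3t dx² + 3t² dx³ + t³ dx⁴, ω² = dx² + 2t dx³ + t² dx⁴, ω³ = dx³ + t dx⁴, ω⁴ = dx⁴. Then dω⁰ = ω¹∧ω⁴ − 3ω²∧ω³, dω¹ = 3 dt∧ω², dω² = 2 dt∧ω³, dω³ = dt∧ω⁴, dω⁴ = 0. -/

import Mathlib

/-- The exterior derivative of a 1-form on `ℝ⁵` evaluated on constant vector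
fields `u, v`. -/
noncomputable def dForm (ω : (Fin 5 → ℝ) → (Fin 5 → ℝ) → ℝ) (x u v : Fin 5 → ℝ) : ℝ :=
  fderiv ℝ (fun y => ω y v) x u - fderiv ℝ (fun y => ω y u) x v

def w0 : (Fin 5 → ℝ) → (Fin 5 → ℝ) → ℝ := fun x v => v 0 + x 1 * v 4 - 3 * x 2 * v 3

def w1 (t : (Fin 5 → ℝ) → ℝ) : (Fin 5 → ℝ) → (Fin 5 → ℝ) → ℝ :=
  fun x v => v 1 + 3 * t x * v 2 + 3 * (t x) ^ 2 * v 3 + (t x) ^ 3 * v 4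

def w2 (t : (Fin 5 → ℝ) → ℝ) : (Fin 5 → ℝ) → (Fin 5 → ℝ) → ℝ :=
  fun x v => v 2 + 2 * t x * v 3 + (t x) ^ 2 * v 4

def w3 (t : (Fin 5 → ℝ) → ℝ) : (Fin 5 → ℝ) → (Fin 5 → ℝ) → ℝ :=
  fun x v => v 3 + t x * v 4

def w4 : (Fin 5 → ℝ) → (Fin 5 → ℝ) → ℝ := fun _ v => v 4

lemma cubic_fderiv {t : (Fin 5 → ℝ) → ℝ} {x : Fin 5 → ℝ} {D : (Fin 5 → ℝ) →L[ℝ] ℝ}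
    (hT : HasFDerivAt t D x) (a b c d : ℝ) :
    HasFDerivAt (fun y => a + b * t y + c * t y ^ 2 + d * t y ^ 3)
      ((b + 2 * c * t x + 3 * d * t x ^ 2) • D) x := by
  have ht2 : HasFDerivAt (fun y => t y ^ 2) ((2 * t x) • D) x := by
    have e : (fun y => t y ^ 2) = fun y => t y * t y := funext fun y => by ring
    rw [e]
    refine (hT.mul hT).congr_fderiv ?_
    ext y; simp; ring
  have ht3 : HasFDerivAt (fun y => t y ^ 3) ((3 * t x ^ 2) • D) x := by
    have e : (fun y => t y ^ 3) = fun y => t y ^ 2 * t y := funext fun y => by ring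
    rw [e]
    refine (ht2.mul hT).congr_fderiv ?_
    ext y; simp; ring
  have h := (((hasFDerivAt_const a x).add (hT.const_mul b)).add
      (ht2.const_mul c)).add (ht3.const_mul d)
  refine h.congr_fderiv ?_
  ext y; simp; ring

/-- Structure equations for the adapted coframe of a marked contact Engel structure:
`dω⁰ = ω¹∧ω⁴ − 3ω²∧ω³`, `dω¹ = 3dt∧ω²`, `dω² = 2dt∧ω³`, `dω³ = dt∧ω⁴`, `dω⁴ = 0`. -/
theorem marked_coframe_structure_equations
    (U : Set (Fin 5 → ℝ)) (hU : IsOpen U) (t : (Fin 5 → ℝ) → ℝ)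
    (ht : ContDiffOn ℝ (⊤ : ℕ∞) t U) :
    ∀ x ∈ U, ∀ u v : Fin 5 → ℝ,
      dForm w0 x u v =
        (w1 t x u * w4 x v - w1 t x v * w4 x u) -
          3 * (w2 t x u * w3 t x v - w2 t x v * w3 t x u) ∧
      dForm (w1 t) x u v =
        3 * (fderiv ℝ t x u * w2 t x v - fderiv ℝ t x v * w2 t x u) ∧
      dForm (w2 t) x u v =
        2 * (fderiv ℝ t x u * w3 t x v - fderiv ℝ t x v * w3 t x u) ∧
      dForm (w3 t) x u v =
        fderiv ℝ t x u * w4 x v - fderiv ℝ t x v * w4 x u ∧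
      dForm w4 x u v = 0 := by
  intro x hx u v
  have hT : HasFDerivAt t (fderiv ℝ t x) x :=
    (((ht.contDiffAt (hU.mem_nhds hx)).differentiableAt (by simp))).hasFDerivAt
  have key : ∀ a b c d : ℝ,
      fderiv ℝ (fun y => a + b * t y + c * t y ^ 2 + d * t y ^ 3) x
        = (b + 2 * c * t x + 3 * d * t x ^ 2) • fderiv ℝ t x :=
    fun a b c d => (cubic_fderiv hT a b c d).fderiv
  have hw1 : ∀ w : Fin 5 → ℝ, fderiv ℝ (fun y => w1 t y w) x
      = (3 * w 2 + 2 * (3 * w 3) * t x + 3 * (w 4) * t x ^ 2) • fderiv ℝ t x := by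
    intro w
    have e : (fun y => w1 t y w)
        = fun y => w 1 + (3 * w 2) * t y + (3 * w 3) * t y ^ 2 + (w 4) * t y ^ 3 :=
      funext fun y => by simp [w1]; ring
    rw [e, key]
  have hw2 : ∀ w : Fin 5 → ℝ, fderiv ℝ (fun y => w2 t y w) x
      = (2 * w 3 + 2 * (w 4) * t x + 3 * 0 * t x ^ 2) • fderiv ℝ t x := by
    intro w
    have e : (fun y => w2 t y w)
        = fun y => w 2 + (2 * w 3) * t y + (w 4) * t y ^ 2 + 0 * t y ^ 3 :=
      funext fun y => by simp [w2]; ring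
    rw [e, key]
  have hw3 : ∀ w : Fin 5 → ℝ, fderiv ℝ (fun y => w3 t y w) x
      = (w 4 + 2 * 0 * t x + 3 * 0 * t x ^ 2) • fderiv ℝ t x := by
    intro w
    have e : (fun y => w3 t y w)
        = fun y => w 3 + (w 4) * t y + 0 * t y ^ 2 + 0 * t y ^ 3 :=
      funext fun y => by simp [w3]; ring
    rw [e, key]
  have hw0 : ∀ w : Fin 5 → ℝ, fderiv ℝ (fun y => w0 y w) x
      = (w 4) • (ContinuousLinearMap.proj (R := ℝ) (φ := fun _ : Fin 5 => ℝ) 1)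
        - (3 * w 3) • (ContinuousLinearMap.proj (R := ℝ) (φ := fun _ : Fin 5 => ℝ) 2) := by
    intro w
    have h1 := (ContinuousLinearMap.proj (R := ℝ) (φ := fun _ : Fin 5 => ℝ) 1).hasFDerivAt (x := x)
    have h2 := (ContinuousLinearMap.proj (R := ℝ) (φ := fun _ : Fin 5 => ℝ) 2).hasFDerivAt (x := x)
    have h := ((hasFDerivAt_const (w 0) x).add (h1.mul_const (w 4))).sub
      ((h2.const_mul 3).mul_const (w 3))
    have e : (fun y => w0 y w)
        = fun y => w 0 + y 1 * w 4 - 3 * y 2 * w 3 := funext fun y => by simp [w0]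
    rw [e]
    refine HasFDerivAt.fderiv ?_
    refine h.congr_fderiv ?_
    ext y
    simp [ContinuousLinearMap.proj_apply]
    ring
  refine ⟨?_, ?_, ?_, ?_, ?_⟩
  · rw [dForm, hw0 v, hw0 u]
    simp only [ContinuousLinearMap.sub_apply, ContinuousLinearMap.smul_apply,
      ContinuousLinearMap.proj_apply, smul_eq_mul, w0, w1, w2, w3, w4]
    ring
  · rw [dForm, hw1 v, hw1 u]
    simp only [ContinuousLinearMap.smul_apply, smul_eq_mul, w1, w2]
    ring
  · rw [dForm, hw2 v, hw2 u]
    simp only [ContinuousLinearMap.smul_apply, smul_eq_mul, w2, w3]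
    ring
  · rw [dForm, hw3 v, hw3 u]
    simp only [ContinuousLinearMap.smul_apply, smul_eq_mul, w3, w4]
    ring
  · simp [dForm, w4]
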